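/- Consider scalar gradient flow dynamics for a one-hidden-layer autoencoder with all coordinates equal: da/dt = (1 − k a φ(b)) φ(b) and db/dt = φ'(b) a (1 − k a φ(b)), with a(0) = a₀, b(0) = b₀, where φ is differentiable with φ'(z) ≠ 0 everywhere. Then along any solution, the conserved relation (a(t)² − a₀²)/2 = ∫_{b₀}^{b(t)} φ(z)/φ'(z) dz holds for all t ≥ 0. -/

import Mathlib

open MeasureTheory Set intervalIntegral
open scoped Interval

private lemma sign_const' {φ : ℝ → ℝ} (hφ : Differentiable ℝ φ) (hφ' : ∀ z, deriv φ z ≠ 0) :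
    (∀ z, 0 < deriv φ z) ∨ (∀ z, deriv φ z < 0) := by
  by_cases h : ∀ z, 0 < deriv φ z
  · exact Or.inl h
  · push_neg at h
    obtain ⟨z₁, hz₁⟩ := h
    have hz₁' : deriv φ z₁ < 0 := lt_of_le_of_ne hz₁ (hφ' z₁)
    right
    intro z
    by_contra hz
    push_neg at hz
    have hz' : 0 < deriv φ z := lt_of_le_of_ne hz (Ne.symm (hφ' z))
    rcases le_total z₁ z with hle | hle
    · obtain ⟨cc, -, hc⟩ := exists_hasDerivWithinAt_eq_of_gt_of_lt hle
        (fun x _ => ((hφ x).hasDerivAt).hasDerivWithinAt) hz₁' hz'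
      exact hφ' cc hc
    · obtain ⟨cc, -, hc⟩ := exists_hasDerivWithinAt_eq_of_lt_of_gt hle
        (fun x _ => ((hφ x).hasDerivAt).hasDerivWithinAt) hz' hz₁'
      exact hφ' cc hc

private lemma key_pos (c : ℝ) (φ : ℝ → ℝ) (hφ : Differentiable ℝ φ) (hφ' : ∀ z, 0 < deriv φ z)
    (a b : ℝ → ℝ)
    (ha : ∀ t, HasDerivAt a ((1 - c * a t * φ (b t)) * φ (b t)) t)
    (hb : ∀ t, HasDerivAt b (deriv φ (b t) * a t * (1 - c * a t * φ (b t))) t) :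
    ∀ t : ℝ, (a t ^ 2 - a 0 ^ 2) / 2 = ∫ z in (b 0)..(b t), φ z / deriv φ z := by
  set g : ℝ → ℝ := fun z => φ z / deriv φ z with hgdef
  set m : ℝ → ℝ := fun t => a t * (1 - c * a t * φ (b t)) with hmdef
  set bd : ℝ → ℝ := fun t => deriv φ (b t) * m t with hbddef
  set w : ℝ → ℝ := fun t => |φ (b t) * m t| with hwdef
  have hda : Differentiable ℝ a := fun t => (ha t).differentiableAt
  have hdb : Differentiable ℝ b := fun t => (hb t).differentiableAt
  have hca : Continuous a := hda.continuous
  have hcb : Continuous b := hdb.continuous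
  have hcφb : Continuous fun t => φ (b t) := hφ.continuous.comp hcb
  have hcm : Continuous m := hca.mul (continuous_const.sub ((continuous_const.mul hca).mul hcφb))
  have hcw : Continuous w := (hcφb.mul hcm).abs
  have hwnn : ∀ t, 0 ≤ w t := by
    intro t; simp only [hwdef]; exact abs_nonneg _
  have hgmeas : Measurable g := (hφ.continuous.measurable).div (measurable_deriv φ)
  have hbdmeas : Measurable bd :=
    ((measurable_deriv φ).comp hcb.measurable).mul hcm.measurable
  have hb' : ∀ t, HasDerivAt b (bd t) t := by
    intro t
    have h := hb t
    simp only [hbddef, hmdef]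
    rwa [← mul_assoc]
  have hE : ∀ t, HasDerivAt (fun s => a s ^ 2 / 2) (φ (b t) * m t) t := by
    intro t
    have h := ((ha t).pow 2).div_const 2
    exact h.congr_deriv (by rw [hmdef]; push_cast; ring)
  have habs : ∀ t, |bd t| * |g (b t)| = w t := by
    intro t
    have h0 : deriv φ (b t) ≠ 0 := (hφ' _).ne'
    rw [← abs_mul]
    simp only [hbddef, hgdef, hwdef]
    congr 1
    field_simp
  -- measure-image inequality
  have measle : ∀ (K : Set ℝ), MeasurableSet K → ∀ (B : Set ℝ), MeasurableSet B →
      volume (b '' K ∩ B) ≤ ∫⁻ t in K ∩ b ⁻¹' B, ENNReal.ofReal |bd t| := by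
    intro K hK B hB
    have hset : b '' K ∩ B = b '' (K ∩ b ⁻¹' B) := by
      ext y
      constructor
      · rintro ⟨⟨x, hx, rfl⟩, hyB⟩
        exact ⟨x, ⟨hx, hyB⟩, rfl⟩
      · rintro ⟨x, ⟨hx, hxB⟩, rfl⟩
        exact ⟨⟨x, hx, rfl⟩, hxB⟩
    rw [hset]
    have h := addHaar_image_le_lintegral_abs_det_fderiv volume
      (hK.inter (hB.preimage hcb.measurable))
      (f' := fun t => ContinuousLinearMap.smulRight (1 : ℝ →L[ℝ] ℝ) (bd t))
      (fun x _ => ((hb' x).hasDerivWithinAt).hasFDerivWithinAt)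
    simpa [ContinuousLinearMap.smulRight_one_eq_toSpanSingleton,
      ContinuousLinearMap.det_toSpanSingleton] using h
  -- weighted image bound
  have step1 : ∀ u v : ℝ, ∫⁻ z in b '' uIcc u v, ENNReal.ofReal |g z|
      ≤ ENNReal.ofReal (∫ t in uIcc u v, w t) := by
    intro u v
    set ν : Measure ℝ := (volume.restrict (uIcc u v)).withDensity
      (fun t => ENNReal.ofReal |bd t|) with hνdef
    have hdm : Measurable fun t => ENNReal.ofReal |bd t| :=
      ENNReal.measurable_ofReal.comp hbdmeas.abs
    have hgo : Measurable fun z => ENNReal.ofReal |g z| :=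
      ENNReal.measurable_ofReal.comp hgmeas.abs
    have hle : volume.restrict (b '' uIcc u v) ≤ Measure.map b ν := by
      refine Measure.le_iff.mpr fun B hB => ?_
      rw [Measure.map_apply hcb.measurable hB, Measure.restrict_apply hB, hνdef,
        withDensity_apply _ (hB.preimage hcb.measurable),
        Measure.restrict_restrict (hB.preimage hcb.measurable)]
      calc volume (B ∩ b '' uIcc u v) = volume (b '' uIcc u v ∩ B) := by rw [inter_comm]
        _ ≤ ∫⁻ t in uIcc u v ∩ b ⁻¹' B, ENNReal.ofReal |bd t| :=
            measle _ measurableSet_uIcc B hB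
        _ = ∫⁻ t in b ⁻¹' B ∩ uIcc u v, ENNReal.ofReal |bd t| := by rw [inter_comm]
    calc ∫⁻ z in b '' uIcc u v, ENNReal.ofReal |g z|
        ≤ ∫⁻ z, ENNReal.ofReal |g z| ∂(Measure.map b ν) := lintegral_mono' hle le_rfl
      _ = ∫⁻ t, ENNReal.ofReal |g (b t)| ∂ν := lintegral_map hgo hcb.measurable
      _ = ∫⁻ t in uIcc u v,
            (fun t => ENNReal.ofReal |bd t|) t * ENNReal.ofReal |g (b t)| ∂volume := by
          have hgob : Measurable fun t => ENNReal.ofReal |g (b t)| := hgo.comp hcb.measurable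
          rw [hνdef, lintegral_withDensity_eq_lintegral_mul _ hdm hgob]
          rfl
      _ = ∫⁻ t in uIcc u v, ENNReal.ofReal (w t) ∂volume := by
          refine lintegral_congr fun t => ?_
          rw [← ENNReal.ofReal_mul (abs_nonneg _), habs t]
      _ = ENNReal.ofReal (∫ t in uIcc u v, w t) := by
          rw [← ofReal_integral_eq_lintegral_ofReal (hcw.integrableOn_uIcc)
            (Filter.Eventually.of_forall fun t => hwnn t)]
  -- integrability and bound
  have himg : ∀ u v : ℝ, uIcc (b u) (b v) ⊆ b '' uIcc u v := by
    intro u v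
    have hpc : IsPreconnected (b '' uIcc u v) := isPreconnected_uIcc.image b hcb.continuousOn
    exact hpc.ordConnected.uIcc_subset (mem_image_of_mem b left_mem_uIcc)
      (mem_image_of_mem b right_mem_uIcc)
  have hinteg : ∀ u v : ℝ, IntegrableOn g (b '' uIcc u v) := by
    intro u v
    refine ⟨hgmeas.aestronglyMeasurable.restrict, ?_⟩
    rw [hasFiniteIntegral_iff_norm]
    calc ∫⁻ z in b '' uIcc u v, ENNReal.ofReal ‖g z‖
        = ∫⁻ z in b '' uIcc u v, ENNReal.ofReal |g z| :=
          lintegral_congr fun z => by rw [Real.norm_eq_abs]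
      _ ≤ ENNReal.ofReal (∫ t in uIcc u v, w t) := step1 u v
      _ < ⊤ := ENNReal.ofReal_lt_top
  have hii : ∀ u v : ℝ, IntervalIntegrable g volume (b u) (b v) := by
    intro u v
    rw [intervalIntegrable_iff]
    exact (hinteg u v).mono_set ((Ioc_subset_Icc_self).trans (himg u v))
  have hbound : ∀ u v : ℝ, |∫ z in (b u)..(b v), g z| ≤ ∫ t in uIcc u v, w t := by
    intro u v
    have h1 : |∫ z in (b u)..(b v), g z| ≤ ∫ z in Ι (b u) (b v), |g z| := by
      simpa [Real.norm_eq_abs] using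
        intervalIntegral.norm_integral_le_integral_norm_uIoc (f := g) (μ := volume)
          (a := b u) (b := b v)
    have h2 : ∫ z in Ι (b u) (b v), |g z| ≤ ∫ z in b '' uIcc u v, |g z| :=
      setIntegral_mono_set (hinteg u v).abs
        (Filter.Eventually.of_forall fun z => abs_nonneg _)
        (HasSubset.Subset.eventuallyLE ((Ioc_subset_Icc_self).trans (himg u v)))
    have h3 : ∫ z in b '' uIcc u v, |g z| ≤ ∫ t in uIcc u v, w t := by
      have hnn : 0 ≤ ∫ t in uIcc u v, w t :=
        setIntegral_nonneg measurableSet_uIcc fun t _ => hwnn t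
      have e1 : ENNReal.ofReal (∫ z in b '' uIcc u v, |g z|)
          = ∫⁻ z in b '' uIcc u v, ENNReal.ofReal |g z| :=
        ofReal_integral_eq_lintegral_ofReal (hinteg u v).abs
          (Filter.Eventually.of_forall fun z => abs_nonneg _)
      exact (ENNReal.ofReal_le_ofReal_iff hnn).mp (by rw [e1]; exact step1 u v)
    linarith
  -- FTC side bound
  have hFTC : ∀ u v : ℝ, ∫ s in u..v, φ (b s) * m s = a v ^ 2 / 2 - a u ^ 2 / 2 := fun u v =>
    integral_eq_sub_of_hasDerivAt (fun s _ => hE s) ((hcφb.mul hcm).intervalIntegrable _ _)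
  have hEbound : ∀ u v : ℝ, |a v ^ 2 / 2 - a u ^ 2 / 2| ≤ ∫ t in uIcc u v, w t := by
    intro u v
    rw [← hFTC u v]
    have h1 : |∫ s in u..v, φ (b s) * m s| ≤ ∫ s in Ι u v, |φ (b s) * m s| := by
      have h := intervalIntegral.norm_integral_le_integral_norm_uIoc
        (f := fun s => φ (b s) * m s) (μ := volume) (a := u) (b := v)
      simp only [Real.norm_eq_abs] at h
      exact h
    calc |∫ s in u..v, φ (b s) * m s| ≤ ∫ s in Ι u v, |φ (b s) * m s| := h1
      _ = ∫ s in Ι u v, w s := rfl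
      _ ≤ ∫ s in uIcc u v, w s :=
          setIntegral_mono_set hcw.integrableOn_uIcc
            (Filter.Eventually.of_forall fun s => hwnn s)
            (HasSubset.Subset.eventuallyLE Ioc_subset_Icc_self)
  -- the conserved quantity
  set D : ℝ → ℝ := fun t => a t ^ 2 / 2 - ∫ z in (b 0)..(b t), g z with hDdef
  clear_value D
  have hsplit : ∀ u v : ℝ,
      D v - D u = (a v ^ 2 / 2 - a u ^ 2 / 2) - ∫ z in (b u)..(b v), g z := by
    intro u v
    have hadd := integral_add_adjacent_intervals (hii 0 u) (hii u v)
    simp only [hDdef]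
    linarith
  have htri : ∀ x y : ℝ, |x - y| ≤ |x| + |y| := by
    intro x y
    calc |x - y| = |x + -y| := by ring_nf
      _ ≤ |x| + |-y| := abs_add_le _ _
      _ = |x| + |y| := by rw [abs_neg]
  have hDb : ∀ u v : ℝ, |D v - D u| ≤ 2 * ∫ t in uIcc u v, w t := by
    intro u v
    rw [hsplit u v]
    have h1 := hEbound u v
    have h2 := hbound u v
    have h3 := htri (a v ^ 2 / 2 - a u ^ 2 / 2) (∫ z in (b u)..(b v), g z)
    linarith
  have hD0 : ∀ t₀ : ℝ, HasDerivAt D 0 t₀ := by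
    intro t₀
    by_cases hm0 : m t₀ = 0
    · -- squeeze case
      have hw0 : w t₀ = 0 := by simp [hwdef, hm0]
      rw [hasDerivAt_iff_isLittleO]
      simp only [smul_zero, sub_zero]
      rw [Asymptotics.isLittleO_iff]
      intro ε hε
      have hev : ∀ᶠ t in nhds t₀, w t < ε / 3 := by
        have ht : Filter.Tendsto w (nhds t₀) (nhds 0) := by
          have h := hcw.continuousAt (x := t₀)
          rwa [ContinuousAt, hw0] at h
        exact ht.eventually_lt_const (by positivity)
      obtain ⟨δ, hδpos, hδ⟩ := Metric.eventually_nhds_iff.mp hev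
      refine Metric.eventually_nhds_iff.mpr ⟨δ, hδpos, fun t ht => ?_⟩
      have hball : ∀ s ∈ uIcc t₀ t, dist s t₀ < δ := by
        intro s hs
        rw [Real.dist_eq]
        rw [Real.dist_eq] at ht
        rcases mem_uIcc.mp hs with ⟨h1, h2⟩ | ⟨h1, h2⟩ <;>
          [skip; skip] <;> cases' abs_lt.mp ht with hl hr <;> rw [abs_lt] <;>
          constructor <;> linarith
      have hint : ∫ s in uIcc t₀ t, w s ≤ (ε / 3) * |t - t₀| := by
        have hm : ∫ s in uIcc t₀ t, w s ≤ ∫ s in uIcc t₀ t, (ε / 3) := by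
          refine setIntegral_mono_on hcw.integrableOn_uIcc (integrableOn_const ?_)
            measurableSet_uIcc fun s hs => (hδ (hball s hs)).le
          rw [Real.volume_interval]; exact ENNReal.ofReal_ne_top
        have hc : ∫ s in uIcc t₀ t, (ε / 3) = |t - t₀| * (ε / 3) := by
          rw [setIntegral_const, Real.volume_real_interval, smul_eq_mul]
        rw [hc] at hm; linarith
      have habs2 : |D t - D t₀| ≤ 2 * ((ε / 3) * |t - t₀|) := by
        have h := hDb t₀ t
        have h2 : (0:ℝ) ≤ ∫ s in uIcc t₀ t, w s :=
          setIntegral_nonneg measurableSet_uIcc fun s _ => hwnn s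
        nlinarith [hint]
      rw [Real.norm_eq_abs, Real.norm_eq_abs]
      calc |D t - D t₀| ≤ 2 * ((ε / 3) * |t - t₀|) := habs2
        _ ≤ ε * |t - t₀| := by nlinarith [abs_nonneg (t - t₀)]
    · rcases lt_or_gt_of_ne hm0 with hneg | hpos
      · -- m t₀ < 0 : locally decreasing
        have hopen : IsOpen {s : ℝ | m s < 0} := isOpen_lt hcm continuous_const
        obtain ⟨p, q, hpq, hsub⟩ :=
          mem_nhds_iff_exists_Ioo_subset.mp (hopen.mem_nhds hneg)
        have hmono : StrictAntiOn b (Ioo p q) := by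
          refine strictAntiOn_of_deriv_neg (convex_Ioo p q) hcb.continuousOn fun x hx => ?_
          rw [interior_Ioo] at hx
          rw [(hb' x).deriv, hbddef]
          exact mul_neg_of_pos_of_neg (hφ' _) (hsub hx)
        have hloc : ∀ u v, u ∈ Ioo p q → v ∈ Ioo p q → u ≤ v →
            ∫ z in (b u)..(b v), g z = a v ^ 2 / 2 - a u ^ 2 / 2 := by
          intro u v hu hv huv
          rcases huv.eq_or_lt with rfl | hlt
          · simp
          have hsubset : Ioc u v ⊆ Ioo p q := fun x hx =>
            ⟨hu.1.trans hx.1, lt_of_le_of_lt hx.2 hv.2⟩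
          have hbvu : b v < b u := hmono hu hv hlt
          have himgIoc : b '' Ioc u v = Ico (b v) (b u) := by
            refine subset_antisymm ?_ (intermediate_value_Ioc' hlt.le hcb.continuousOn)
            rintro _ ⟨x, hx, rfl⟩
            constructor
            · rcases hx.2.eq_or_lt with rfl | h
              · exact le_refl _
              · exact (hmono (hsubset hx) hv h).le
            · exact hmono hu (hsubset hx) hx.1
          have hchg := integral_image_eq_integral_abs_deriv_smul measurableSet_Ioc
            (fun x _ => (hb' x).hasDerivWithinAt) (hmono.injOn.mono hsubset) g
          rw [himgIoc] at hchg
          have hIcoIoc : ∫ z in Ico (b v) (b u), g z = ∫ z in Ioc (b v) (b u), g z := by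
            rw [integral_Ico_eq_integral_Ioo, integral_Ioc_eq_integral_Ioo]
          have heq : EqOn (fun x => |bd x| • g (b x)) (fun x => -(φ (b x) * m x)) (Ioc u v) := by
            intro x hx
            have hmx : m x < 0 := hsub (hsubset hx)
            have hpx : bd x < 0 := by
              rw [hbddef]; exact mul_neg_of_pos_of_neg (hφ' _) hmx
            simp only [smul_eq_mul]
            rw [abs_of_neg hpx, hbddef, hgdef]
            have h0 : deriv φ (b x) ≠ 0 := (hφ' (b x)).ne'
            field_simp
          have hrhs : ∫ x in Ioc u v, |bd x| • g (b x) = -(a v ^ 2 / 2 - a u ^ 2 / 2) := by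
            rw [setIntegral_congr_fun measurableSet_Ioc heq]
            have hneg' : ∫ x in Ioc u v, -(φ (b x) * m x) = -∫ x in Ioc u v, φ (b x) * m x :=
              integral_neg _
            rw [hneg', ← intervalIntegral.integral_of_le hlt.le, hFTC u v]
          rw [intervalIntegral.integral_symm, intervalIntegral.integral_of_le hbvu.le,
            ← hIcoIoc, hchg, hrhs]
          ring
        have hconst : ∀ s ∈ Ioo p q, D s = D t₀ := by
          intro s hs
          rcases le_total s t₀ with h | h
          · have hl := hloc s t₀ hs hpq h
            have hsp := hsplit s t₀
            rw [hl] at hsp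
            linarith
          · have hl := hloc t₀ s hpq hs h
            have hsp := hsplit t₀ s
            rw [hl] at hsp
            linarith
        exact (hasDerivAt_const t₀ (D t₀)).congr_of_eventuallyEq
          (Filter.eventuallyEq_of_mem (Ioo_mem_nhds hpq.1 hpq.2) fun s hs => hconst s hs)
      · -- 0 < m t₀ : locally increasing
        have hopen : IsOpen {s : ℝ | 0 < m s} := isOpen_lt continuous_const hcm
        obtain ⟨p, q, hpq, hsub⟩ :=
          mem_nhds_iff_exists_Ioo_subset.mp (hopen.mem_nhds hpos)
        have hmono : StrictMonoOn b (Ioo p q) := by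
          refine strictMonoOn_of_deriv_pos (convex_Ioo p q) hcb.continuousOn fun x hx => ?_
          rw [interior_Ioo] at hx
          rw [(hb' x).deriv, hbddef]
          exact mul_pos (hφ' _) (hsub hx)
        have hloc : ∀ u v, u ∈ Ioo p q → v ∈ Ioo p q → u ≤ v →
            ∫ z in (b u)..(b v), g z = a v ^ 2 / 2 - a u ^ 2 / 2 := by
          intro u v hu hv huv
          rcases huv.eq_or_lt with rfl | hlt
          · simp
          have hsubset : Ioc u v ⊆ Ioo p q := fun x hx =>
            ⟨hu.1.trans hx.1, lt_of_le_of_lt hx.2 hv.2⟩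
          have hbuv : b u < b v := hmono hu hv hlt
          have himgIoc : b '' Ioc u v = Ioc (b u) (b v) := by
            refine subset_antisymm ?_ (intermediate_value_Ioc hlt.le hcb.continuousOn)
            rintro _ ⟨x, hx, rfl⟩
            refine ⟨hmono hu (hsubset hx) hx.1, ?_⟩
            rcases hx.2.eq_or_lt with rfl | h
            · exact le_refl _
            · exact (hmono (hsubset hx) hv h).le
          have hchg := integral_image_eq_integral_abs_deriv_smul measurableSet_Ioc
            (fun x _ => (hb' x).hasDerivWithinAt) (hmono.injOn.mono hsubset) g
          rw [himgIoc] at hchg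
          rw [intervalIntegral.integral_of_le hbuv.le, hchg]
          have heq : EqOn (fun x => |bd x| • g (b x)) (fun x => φ (b x) * m x) (Ioc u v) := by
            intro x hx
            have hmx : 0 < m x := hsub (hsubset hx)
            have hpx : 0 < bd x := by rw [hbddef]; exact mul_pos (hφ' _) hmx
            simp only [smul_eq_mul]
            rw [abs_of_pos hpx, hbddef, hgdef]
            have h0 : deriv φ (b x) ≠ 0 := (hφ' (b x)).ne'
            field_simp
          rw [setIntegral_congr_fun measurableSet_Ioc heq,
            ← intervalIntegral.integral_of_le hlt.le]
          exact hFTC u v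
        have hconst : ∀ s ∈ Ioo p q, D s = D t₀ := by
          intro s hs
          rcases le_total s t₀ with h | h
          · have hl := hloc s t₀ hs hpq h
            have hsp := hsplit s t₀
            rw [hl] at hsp
            linarith
          · have hl := hloc t₀ s hpq hs h
            have hsp := hsplit t₀ s
            rw [hl] at hsp
            linarith
        exact (hasDerivAt_const t₀ (D t₀)).congr_of_eventuallyEq
          (Filter.eventuallyEq_of_mem (Ioo_mem_nhds hpq.1 hpq.2) fun s hs => hconst s hs)
  have hdiff : Differentiable ℝ D := fun t => (hD0 t).differentiableAt
  intro t
  have hconst := is_const_of_deriv_eq_zero hdiff (fun s => (hD0 s).deriv) t 0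
  simp only [hDdef] at hconst
  rw [intervalIntegral.integral_same] at hconst
  linarith

theorem gradient_flow_conserved_relation (k : ℕ)
    (φ : ℝ → ℝ) (hφ : Differentiable ℝ φ) (hφ' : ∀ z, deriv φ z ≠ 0)
    (a b : ℝ → ℝ)
    (ha : ∀ t, HasDerivAt a ((1 - (k : ℝ) * a t * φ (b t)) * φ (b t)) t)
    (hb : ∀ t, HasDerivAt b (deriv φ (b t) * a t * (1 - (k : ℝ) * a t * φ (b t))) t) :
    ∀ t ≥ (0 : ℝ), (a t ^ 2 - a 0 ^ 2) / 2 = ∫ z in (b 0)..(b t), φ z / deriv φ z := by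
  rcases sign_const' hφ hφ' with hpos | hneg
  · intro t _
    exact key_pos (k : ℝ) φ hφ hpos a b ha hb t
  · intro t _
    have hd : ∀ z, deriv (fun z => -φ z) z = -deriv φ z := fun z => deriv.neg
    have hposn : ∀ z, 0 < deriv (fun z => -φ z) z := fun z => by
      rw [hd]; linarith [hneg z]
    have ha' : ∀ s, HasDerivAt (fun r => -a r)
        ((1 - (k : ℝ) * (-a s) * (-φ (b s))) * (-φ (b s))) s := by
      intro s
      have h := (ha s).neg
      exact h.congr_deriv (by ring)
    have hb' : ∀ s, HasDerivAt b
        (deriv (fun z => -φ z) (b s) * (-a s) * (1 - (k : ℝ) * (-a s) * (-φ (b s)))) s := by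
      intro s
      have h := hb s
      rw [hd]
      convert h using 1
      ring
    have hkey := key_pos (k : ℝ) (fun z => -φ z) hφ.neg hposn (fun r => -a r) b ha' hb' t
    have hint : ∀ z, -φ z / deriv (fun z => -φ z) z = φ z / deriv φ z := fun z => by
      rw [hd, neg_div_neg_eq]
    calc (a t ^ 2 - a 0 ^ 2) / 2 = ((-a t) ^ 2 - (-a 0) ^ 2) / 2 := by ring
      _ = ∫ z in (b 0)..(b t), -φ z / deriv (fun z => -φ z) z := hkey
      _ = ∫ z in (b 0)..(b t), φ z / deriv φ z :=
          intervalIntegral.integral_congr fun z _ => hint z
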